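/- Let A be a Deligne-finite k-linear abelian category over an algebraically closed field k, with a fixed ordering S_1,…,S_n of its simple objects, and suppose [Δ_i : S_i] = 1 for each i. Then for any choice of phases 0 = φ_0 < φ_1 < … < φ_n < 1 there exist positive reals m(S_1),…,m(S_n) such that the stability function Z determined by Z(S_i) = m(S_i) e^{iπφ_i} satisfies φ_{i−1} < φ(Δ_i) ≤ φ_i for each i, with φ(Δ_i) = φ_i if and only if Δ_i = S_i; for such Z each standard object Δ_i is Z-stable, and φ(Δ_1) < φ(Δ_2) < … < φ(Δ_n). -/

import Mathlib

open CategoryTheory CategoryTheory.Limits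

universe v u

namespace HWPaper

variable {C : Type u} [Category.{v} C]

/-- `p : P ⟶ X` exhibits `P` as a projective cover of `X`:
`P` is projective, `p` is epi, and `p` is a superfluous epimorphism. -/
def IsProjCover (P X : C) (p : P ⟶ X) : Prop :=
  Projective P ∧ Epi p ∧ ∀ ⦃Y : C⦄ (f : Y ⟶ P), Epi (f ≫ p) → Epi f

/-- `ι : X ⟶ I` exhibits `I` as an injective hull of `X`. -/
def IsInjHull (X I : C) (ι : X ⟶ I) : Prop :=
  Injective I ∧ Mono ι ∧ ∀ ⦃Y : C⦄ (f : I ⟶ Y), Mono (ι ≫ f) → Mono f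

/-- `q : P ⟶ D` exhibits `D` as the maximal quotient of `P` lying in the class `mem`:
every quotient of `P` lying in `mem` factors through `q`. -/
def IsMaxQuotientIn (mem : C → Prop) (P D : C) (q : P ⟶ D) : Prop :=
  Epi q ∧ mem D ∧ ∀ ⦃Q : C⦄ (e : P ⟶ Q), Epi e → mem Q → ∃ r : D ⟶ Q, q ≫ r = e

/-- `m : N ⟶ I` exhibits `N` as the maximal subobject of `I` lying in the class `mem`. -/
def IsMaxSubobjectIn (mem : C → Prop) (I N : C) (m : N ⟶ I) : Prop :=
  Mono m ∧ mem N ∧ ∀ ⦃M : C⦄ (s : M ⟶ I), Mono s → mem M → ∃ r : M ⟶ N, r ≫ m = s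

/-- The extension closure of a class of objects in an abelian category. -/
inductive ExtClosure [Abelian C] (P : C → Prop) : C → Prop
  | of (X : C) : P X → ExtClosure P X
  | zero (X : C) : IsZero X → ExtClosure P X
  | ext (S : ShortComplex C) : S.ShortExact → ExtClosure P S.X₁ → ExtClosure P S.X₃ →
      ExtClosure P S.X₂

variable (C) in
/-- The subgroup of relations coming from short exact sequences. -/
def K0Relations [Abelian C] : AddSubgroup (FreeAbelianGroup C) :=
  AddSubgroup.closure {x | ∃ S : ShortComplex C, S.ShortExact ∧
    x = FreeAbelianGroup.of S.X₂ - FreeAbelianGroup.of S.X₁ - FreeAbelianGroup.of S.X₃}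

variable (C) in
/-- The Grothendieck group of an abelian category. -/
def K0 [Abelian C] : Type u := FreeAbelianGroup C ⧸ K0Relations C

noncomputable instance [Abelian C] : AddCommGroup (K0 C) :=
  QuotientAddGroup.Quotient.addCommGroup _

/-- The class of an object in the Grothendieck group. -/
def K0.cls [Abelian C] (X : C) : K0 C := QuotientAddGroup.mk (FreeAbelianGroup.of X)

/-- The data of a Deligne-finite `k`-linear abelian category with an ordering
`S 0, …, S (n-1)` of its simple objects, together with projective covers, injective hulls,
standard and costandard objects, and the Jordan–Hölder multiplicity function. -/
structure DeligneData (k : Type v) [Field k] [IsAlgClosed k]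
    (C : Type u) [Category.{v} C] [Abelian C] [Linear k C] [EnoughProjectives C]
    (n : ℕ) where
  /-- the simple objects -/
  S : Fin n → C
  /-- the projective covers -/
  P : Fin n → C
  /-- the injective hulls -/
  I : Fin n → C
  /-- the standard objects -/
  Δ : Fin n → C
  /-- the costandard objects -/
  nabla : Fin n → C
  /-- the projective cover maps -/
  p : ∀ i, P i ⟶ S i
  /-- the injective hull maps -/
  ι : ∀ i, S i ⟶ I i
  /-- the quotient maps onto the standard objects -/
  q : ∀ i, P i ⟶ Δ i
  /-- the inclusions of the costandard objects -/
  m : ∀ i, nabla i ⟶ I i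
  /-- the Jordan–Hölder multiplicity `[X : S j]` -/
  mult : C → Fin n → ℕ
  homFinite : ∀ X Y : C, FiniteDimensional k (X ⟶ Y)
  ext1Finite : ∀ X Y : C, FiniteDimensional k (((Ext k C 1).obj (Opposite.op X)).obj Y)
  simple : ∀ i, Simple (S i)
  distinct : ∀ i j, Nonempty (S i ≅ S j) → i = j
  exhaustive : ∀ X : C, Simple X → ∃ i, Nonempty (X ≅ S i)
  projCover : ∀ i, IsProjCover (P i) (S i) (p i)
  injHull : ∀ i, IsInjHull (S i) (I i) (ι i)
  std : ∀ i, IsMaxQuotientIn (ExtClosure (fun X => ∃ j, j ≤ i ∧ Nonempty (X ≅ S j)))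
      (P i) (Δ i) (q i)
  costd : ∀ i, IsMaxSubobjectIn (ExtClosure (fun X => ∃ j, j ≤ i ∧ Nonempty (X ≅ S j)))
      (I i) (nabla i) (m i)
  mult_simple : ∀ i j, mult (S i) j = if i = j then 1 else 0
  mult_additive : ∀ T : ShortComplex C, T.ShortExact →
      ∀ j, mult T.X₂ j = mult T.X₁ j + mult T.X₃ j
  mult_eq_zero_iff : ∀ X : C, (∀ j, mult X j = 0) ↔ IsZero X

variable {k : Type v} [Field k] [IsAlgClosed k] [Abelian C] [Linear k C]
  [EnoughProjectives C] {n : ℕ}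

/-- The Serre subcategory `A_i`, i.e. the extension closure of `S 0, …, S i`. -/
def DeligneData.serre (D : DeligneData k C n) (i : Fin n) : C → Prop :=
  ExtClosure (fun X => ∃ j, j ≤ i ∧ Nonempty (X ≅ D.S j))

/-- `A` is a highest-weight category with respect to the given ordering of its simple
objects: `End (Δ i) ≅ k` and each `P i` lies in the extension closure of `Δ i, …, Δ (n-1)`. -/
def DeligneData.IsHighestWeight (D : DeligneData k C n) : Prop :=
  ∀ i, Nonempty (End (D.Δ i) ≃ₐ[k] k) ∧
    ExtClosure (fun X => ∃ j, i ≤ j ∧ Nonempty (X ≅ D.Δ j)) (D.P i)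


/-- The upper half plane with the positive real axis removed:
`ℍ = { r·exp(iπφ) | r > 0, φ ∈ (0,1] }`, i.e. the set of nonzero complex numbers
whose argument lies in `(0, π]`. -/
def stabilityHalfPlane : Set ℂ := {z | 0 < z.arg}

/-- The phase `φ(z) ∈ (0,1]` of an element `z = r·exp(iπφ(z))` of `ℍ`. -/
noncomputable def phase (z : ℂ) : ℝ := z.arg / Real.pi

/-- A stability function on an abelian category: an additive homomorphism
`Z : K(A) → ℂ` sending every nonzero object into the half plane `ℍ`. -/
def IsStabilityFunction [Abelian C] (Z : K0 C →+ ℂ) : Prop :=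
  ∀ X : C, ¬ IsZero X → Z (K0.cls X) ∈ stabilityHalfPlane

/-- An object is `Z`-semistable if every nonzero proper subobject has phase at most
that of the object. -/
def IsZSemistable [Abelian C] (Z : K0 C →+ ℂ) (X : C) : Prop :=
  ¬ IsZero X ∧ ∀ ⦃Y : C⦄ (f : Y ⟶ X), Mono f → ¬ IsZero Y → ¬ IsIso f →
    phase (Z (K0.cls Y)) ≤ phase (Z (K0.cls X))

/-- An object is `Z`-stable if every nonzero proper subobject has phase strictly less
than that of the object. -/
def IsZStable [Abelian C] (Z : K0 C →+ ℂ) (X : C) : Prop :=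
  ¬ IsZero X ∧ ∀ ⦃Y : C⦄ (f : Y ⟶ X), Mono f → ¬ IsZero Y → ¬ IsIso f →
    phase (Z (K0.cls Y)) < phase (Z (K0.cls X))

/-- A Harder–Narasimhan filtration of `X`: a filtration
`0 = F 0 ⊂ F 1 ⊂ ⋯ ⊂ F d = X` whose factors (the cokernels of the inclusions) are
`Z`-semistable of strictly decreasing phase. -/
structure HNFiltration [Abelian C] (Z : K0 C →+ ℂ) (X : C) where
  /-- the length of the filtration -/
  d : ℕ
  /-- the filtration steps -/
  F : Fin (d + 1) → C
  isZero_bot : IsZero (F 0)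
  top_iso : Nonempty (F (Fin.last d) ≅ X)
  /-- the inclusion maps -/
  f : ∀ l : Fin d, F l.castSucc ⟶ F l.succ
  mono : ∀ l, Mono (f l)
  semistable : ∀ l, IsZSemistable Z (cokernel (f l))
  phases_strictAnti : ∀ l l' : Fin d, l < l' →
    phase (Z (K0.cls (cokernel (f l')))) < phase (Z (K0.cls (cokernel (f l))))
section
open ZeroObject
variable {C : Type u} [Category.{v} C] {k : Type v} [Field k] [IsAlgClosed k] [Abelian C]
  [Linear k C] [EnoughProjectives C] {n : ℕ}

namespace DeligneData

lemma mult_zero (D : DeligneData k C n) {X : C} (h : IsZero X) (j : Fin n) :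
    D.mult X j = 0 := (D.mult_eq_zero_iff X).mpr h j

lemma mult_iso (D : DeligneData k C n) {X Y : C} (e : X ≅ Y) (j : Fin n) :
    D.mult X j = D.mult Y j := by
  let S := ShortComplex.mk e.hom (0 : Y ⟶ (0 : C)) (by simp)
  have hS : S.ShortExact := by
    refine ShortComplex.ShortExact.mk' ?_ ?_ ?_
    · rw [S.exact_iff_epi rfl]; infer_instance
    · infer_instance
    · exact ⟨fun g g' _ => (Limits.isZero_zero C).eq_of_src g g'⟩
  have := D.mult_additive S hS j
  simp only [S] at this
  rw [this, D.mult_zero (Limits.isZero_zero C) j]; ring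

lemma mult_of_mono (D : DeligneData k C n) {X Y : C} (f : Y ⟶ X) [Mono f] (j : Fin n) :
    D.mult X j = D.mult Y j + D.mult (cokernel f) j := by
  let S := ShortComplex.mk f (cokernel.π f) (cokernel.condition f)
  have hS : S.ShortExact := by
    refine ShortComplex.ShortExact.mk' ?_ ?_ ?_
    · exact S.exact_of_g_is_cokernel (cokernelIsCokernel f)
    · assumption
    · infer_instance
  exact D.mult_additive S hS j

lemma mult_of_epi (D : DeligneData k C n) {X Q : C} (e : X ⟶ Q) [Epi e] (j : Fin n) :
    D.mult X j = D.mult (kernel e) j + D.mult Q j := by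
  let S := ShortComplex.mk (kernel.ι e) e (kernel.condition e)
  have hS : S.ShortExact := by
    refine ShortComplex.ShortExact.mk' ?_ ?_ ?_
    · exact S.exact_of_f_is_kernel (kernelIsKernel e)
    · infer_instance
    · assumption
  exact D.mult_additive S hS j

lemma serre_mult (D : DeligneData k C n) {i : Fin n} {X : C} (h : D.serre i X)
    {j : Fin n} (hj : i < j) : D.mult X j = 0 := by
  induction h with
  | of X hX =>
    obtain ⟨l, hl, ⟨e⟩⟩ := hX
    rw [D.mult_iso e j, D.mult_simple l j, if_neg]
    exact fun hlj => absurd (hlj ▸ hl) (not_le.mpr hj)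
  | zero X hX => exact D.mult_zero hX j
  | ext S hS h1 h3 ih1 ih3 => rw [D.mult_additive S hS j, ih1, ih3]


lemma exists_epi_to_simple (D : DeligneData k C n) (i : Fin n) {Q : C}
    (e : D.P i ⟶ Q) (he : Epi e) (hQ : ¬ IsZero Q) :
    ∃ r : Q ⟶ D.S i, Epi r ∧ e ≫ r = D.p i := by
  obtain ⟨hproj, hepi, hsup⟩ := D.projCover i
  have hsimple := D.simple i
  have hg0 : kernel.ι e ≫ D.p i = 0 := by
    by_contra hg
    have : Epi (kernel.ι e ≫ D.p i) := epi_of_nonzero_to_simple hg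
    have hιepi : Epi (kernel.ι e) := hsup _ this
    have : IsIso (kernel.ι e) := isIso_of_mono_of_epi _
    have he0 : e = 0 := by
      have h := kernel.condition e
      rw [← cancel_epi (kernel.ι e), h, comp_zero]
    apply hQ
    rw [IsZero.iff_id_eq_zero, ← cancel_epi e, he0]
    simp
  haveI := he
  refine ⟨Abelian.epiDesc e (D.p i) hg0, ?_, Abelian.comp_epiDesc e (D.p i) hg0⟩
  exact epi_of_epi_fac (Abelian.comp_epiDesc e (D.p i) hg0)

lemma mult_pos_of_epi (D : DeligneData k C n) (i : Fin n) {Q : C}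
    (e : D.P i ⟶ Q) (he : Epi e) (hQ : ¬ IsZero Q) : 1 ≤ D.mult Q i := by
  obtain ⟨r, hr, -⟩ := D.exists_epi_to_simple i e he hQ
  haveI := hr
  have := D.mult_of_epi r i
  rw [D.mult_simple i i, if_pos rfl] at this
  omega

/-- The standard object is nonzero. -/
lemma delta_ne_zero (D : DeligneData k C n) (i : Fin n) (hΔ : D.mult (D.Δ i) i = 1) :
    ¬ IsZero (D.Δ i) := fun h => by
  have := D.mult_zero h i; omega

lemma delta_mult_gt (D : DeligneData k C n) (i : Fin n) {j : Fin n} (hj : i < j) :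
    D.mult (D.Δ i) j = 0 :=
  D.serre_mult (D.std i).2.1 hj

/-- If `Δ i` has no composition factors besides `S i`, then `Δ i ≅ S i`. -/
lemma delta_iso_simple (D : DeligneData k C n) (i : Fin n)
    (h : ∀ j, D.mult (D.Δ i) j = (if i = j then 1 else 0)) :
    Nonempty (D.Δ i ≅ D.S i) := by
  obtain ⟨hq, -, -⟩ := D.std i
  obtain ⟨r, hr, -⟩ := D.exists_epi_to_simple i (D.q i) hq (D.delta_ne_zero i (by rw [h i]; simp))
  haveI := hr
  have hker : IsZero (kernel r) := by
    rw [← D.mult_eq_zero_iff]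
    intro j
    have := D.mult_of_epi r j
    rw [h j, D.mult_simple i j] at this
    omega
  haveI : Mono r := Preadditive.mono_of_isZero_kernel r hker
  haveI : IsIso r := isIso_of_mono_of_epi r
  exact ⟨asIso r⟩


lemma exists_Zhom (D : DeligneData k C n) (z : Fin n → ℂ) :
    ∃ Z : K0 C →+ ℂ, ∀ X : C, Z (K0.cls X) = ∑ j, (D.mult X j : ℂ) * z j := by
  set Zobj : C → ℂ := fun X => ∑ j, (D.mult X j : ℂ) * z j with hZobj
  set Zfree : FreeAbelianGroup C →+ ℂ := FreeAbelianGroup.lift Zobj with hZfree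
  have hker : K0Relations C ≤ Zfree.ker := by
    rw [K0Relations, AddSubgroup.closure_le]
    rintro x ⟨S, hS, rfl⟩
    simp only [SetLike.mem_coe, AddMonoidHom.mem_ker, map_sub, hZfree,
      FreeAbelianGroup.lift_apply_of, hZobj]
    rw [← Finset.sum_sub_distrib, ← Finset.sum_sub_distrib]
    apply Finset.sum_eq_zero
    intro j _
    rw [D.mult_additive S hS j]
    push_cast
    ring
  refine ⟨QuotientAddGroup.lift (K0Relations C) Zfree hker, fun X => ?_⟩
  show QuotientAddGroup.lift (K0Relations C) Zfree hker
    (QuotientAddGroup.mk (FreeAbelianGroup.of X)) = _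
  rw [QuotientAddGroup.lift_mk]
  exact FreeAbelianGroup.lift_apply_of _ _
end DeligneData
end

lemma L_eq (α : ℝ) (z : ℂ) :
    (Complex.exp ((-α : ℝ) * Complex.I) * z).im = ‖z‖ * Real.sin (z.arg - α) := by
  conv_lhs => rw [← Complex.norm_mul_exp_arg_mul_I z]
  rw [show Complex.exp ((-α : ℝ) * Complex.I) * ((‖z‖ : ℂ) * Complex.exp (z.arg * Complex.I))
      = (‖z‖ : ℂ) * Complex.exp (((z.arg - α : ℝ)) * Complex.I) by
    rw [mul_comm (Complex.exp _), mul_assoc, ← Complex.exp_add]; push_cast; ring_nf]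
  rw [Complex.mul_im, Complex.ofReal_re, Complex.ofReal_im, Complex.exp_ofReal_mul_I_im]; ring

lemma arg_mem (z : ℂ) (hz : 0 < z.im) : 0 < z.arg ∧ z.arg < Real.pi := by
  constructor
  · rcases lt_or_eq_of_le (Complex.arg_nonneg_iff.mpr hz.le) with h | h
    · exact h
    · exfalso; have := Complex.arg_eq_zero_iff.mp h.symm; linarith [this.2]
  · rcases lt_or_eq_of_le (Complex.arg_le_pi z) with h | h
    · exact h
    · exfalso; have := Complex.arg_eq_pi_iff.mp h; linarith [this.2]

/-- master sign lemma -/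
lemma arg_sign (α : ℝ) (hα0 : 0 ≤ α) (hαπ : α < Real.pi) (z : ℂ) (hz : 0 < z.im) :
    (α < z.arg ↔ 0 < (Complex.exp ((-α : ℝ) * Complex.I) * z).im) ∧
    (z.arg < α ↔ (Complex.exp ((-α : ℝ) * Complex.I) * z).im < 0) := by
  obtain ⟨h1, h2⟩ := arg_mem z hz
  have hz0 : z ≠ 0 := by intro h; rw [h] at hz; simp at hz
  have habs : 0 < ‖z‖ := norm_pos_iff.mpr hz0
  rw [L_eq]
  constructor
  · constructor
    · intro h
      have : 0 < Real.sin (z.arg - α) := Real.sin_pos_of_pos_of_lt_pi (by linarith) (by linarith)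
      positivity
    · intro h
      by_contra hc
      push_neg at hc
      have : Real.sin (z.arg - α) ≤ 0 := by
        rcases lt_or_eq_of_le hc with h' | h'
        · have := Real.sin_pos_of_pos_of_lt_pi (x := α - z.arg) (by linarith) (by linarith)
          rw [show z.arg - α = -(α - z.arg) by ring, Real.sin_neg]; linarith
        · rw [h']; simp
      nlinarith
  · constructor
    · intro h
      have : 0 < Real.sin (α - z.arg) := Real.sin_pos_of_pos_of_lt_pi (by linarith) (by linarith)
      rw [show z.arg - α = -(α - z.arg) by ring, Real.sin_neg]
      nlinarith
    · intro h
      by_contra hc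
      push_neg at hc
      have : 0 ≤ Real.sin (z.arg - α) := by
        rcases lt_or_eq_of_le hc with h' | h'
        · exact (Real.sin_pos_of_pos_of_lt_pi (by linarith) (by linarith)).le
        · rw [← h']; simp
      nlinarith

noncomputable def mfun (c : ℕ → ℕ → ℕ) (s : ℕ → ℝ) : ℕ → ℝ
  | i => (1 + ∑ j ∈ (Finset.range i).attach, (c i j.1 : ℝ) * mfun c s j.1) / s i
  decreasing_by exact Finset.mem_range.mp j.2

lemma mfun_def (c : ℕ → ℕ → ℕ) (s : ℕ → ℝ) (i : ℕ) :
    mfun c s i = (1 + ∑ j ∈ (Finset.range i).attach, (c i j.1 : ℝ) * mfun c s j.1) / s i := by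
  rw [mfun]

lemma mfun_pos (c : ℕ → ℕ → ℕ) (s : ℕ → ℝ) (hs : ∀ i, 0 < s i) (i : ℕ) : 0 < mfun c s i := by
  induction i using Nat.strong_induction_on with
  | _ i ih =>
    rw [mfun_def]
    apply div_pos _ (hs i)
    have : 0 ≤ ∑ j ∈ (Finset.range i).attach, (c i j.1 : ℝ) * mfun c s j.1 := by
      apply Finset.sum_nonneg
      intro j _
      exact mul_nonneg (Nat.cast_nonneg _) (ih j.1 (Finset.mem_range.mp j.2)).le
    linarith

lemma L_term (α t r : ℝ) :
    (Complex.exp ((-α : ℝ) * Complex.I) * ((r : ℂ) * Complex.exp ((t : ℝ) * Complex.I))).im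
      = r * Real.sin (t - α) := by
  rw [show Complex.exp ((-α : ℝ) * Complex.I) * ((r : ℂ) * Complex.exp ((t : ℝ) * Complex.I))
      = (r : ℂ) * Complex.exp (((t - α : ℝ)) * Complex.I) by
    rw [mul_left_comm, ← Complex.exp_add]; push_cast; ring_nf]
  rw [Complex.mul_im, Complex.ofReal_re, Complex.ofReal_im, Complex.exp_ofReal_mul_I_im]; ring

lemma sum_L (n : ℕ) (θ mv : Fin n → ℝ) (a : Fin n → ℕ) (α : ℝ) :
    (Complex.exp ((-α : ℝ) * Complex.I) *
      ∑ j, (a j : ℂ) * ((mv j : ℂ) * Complex.exp ((θ j : ℝ) * Complex.I))).im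
      = ∑ j, (a j : ℝ) * (mv j * Real.sin (θ j - α)) := by
  rw [Finset.mul_sum, Complex.im_sum]
  refine Finset.sum_congr rfl fun j _ => ?_
  rw [show (a j : ℂ) * ((mv j : ℂ) * Complex.exp ((θ j : ℝ) * Complex.I))
      = (((a j : ℝ) * mv j : ℝ) : ℂ) * Complex.exp ((θ j : ℝ) * Complex.I) by push_cast; ring]
  rw [L_term]; ring


section MainProof
open ZeroObject
variable {C : Type u} [Category.{v} C] {k : Type v} [Field k] [IsAlgClosed k] [Abelian C]
  [Linear k C] [EnoughProjectives C] {n : ℕ}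

theorem exists_stabilityFunction_standard_stable' (D : DeligneData k C n)
    (hΔ : ∀ i, D.mult (D.Δ i) i = 1)
    (φ : Fin (n + 1) → ℝ) (hφ0 : φ 0 = 0) (hφmono : StrictMono φ)
    (hφlast : φ (Fin.last n) < 1) :
    ∃ m : Fin n → ℝ, (∀ i, 0 < m i) ∧
      ∃ Z : K0 C →+ ℂ, IsStabilityFunction Z ∧
        (∀ i : Fin n, Z (K0.cls (D.S i)) =
          (m i : ℂ) * Complex.exp ((Real.pi * φ i.succ : ℝ) * Complex.I)) ∧
        (∀ i : Fin n, φ i.castSucc < phase (Z (K0.cls (D.Δ i))) ∧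
          phase (Z (K0.cls (D.Δ i))) ≤ φ i.succ) ∧
        (∀ i : Fin n, phase (Z (K0.cls (D.Δ i))) = φ i.succ ↔ Nonempty (D.Δ i ≅ D.S i)) ∧
        (∀ i, IsZStable Z (D.Δ i)) ∧
        (∀ i j : Fin n, i < j →
          phase (Z (K0.cls (D.Δ i))) < phase (Z (K0.cls (D.Δ j)))) := by
  classical
  have hπ := Real.pi_pos
  set θ : Fin n → ℝ := fun j => Real.pi * φ j.succ with hθdef
  set A : Fin n → ℝ := fun i => Real.pi * φ i.castSucc with hAdef
  have hφnonneg : ∀ j : Fin (n+1), 0 ≤ φ j := fun j => hφ0 ▸ hφmono.monotone (Fin.zero_le j)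
  have hφlt1 : ∀ j : Fin (n+1), φ j < 1 :=
    fun j => lt_of_le_of_lt (hφmono.monotone (Fin.le_last j)) hφlast
  have hφsuccpos : ∀ j : Fin n, 0 < φ j.succ := fun j => by
    have h0 : (0 : Fin (n+1)) < j.succ := by
      rw [Fin.lt_def]; simp
    have := hφmono h0
    rw [hφ0] at this
    exact this
  have hθpos : ∀ j, 0 < θ j := fun j => mul_pos hπ (hφsuccpos j)
  have hθlt : ∀ j, θ j < Real.pi := fun j => by
    have h := hφlt1 j.succ
    show Real.pi * φ j.succ < Real.pi
    calc Real.pi * φ j.succ < Real.pi * 1 := (mul_lt_mul_iff_right₀ hπ).mpr h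
    _ = Real.pi := mul_one _
  have hA0 : ∀ i, 0 ≤ A i := fun i => mul_nonneg hπ.le (hφnonneg _)
  have hAltπ : ∀ i, A i < Real.pi := fun i => by
    have h := hφlt1 i.castSucc
    show Real.pi * φ i.castSucc < Real.pi
    calc Real.pi * φ i.castSucc < Real.pi * 1 := (mul_lt_mul_iff_right₀ hπ).mpr h
    _ = Real.pi := mul_one _
  have hAθ : ∀ i, A i < θ i := fun i => by
    have h : φ i.castSucc < φ i.succ := hφmono (i.castSucc_lt_succ)
    show Real.pi * φ i.castSucc < Real.pi * φ i.succ
    exact (mul_lt_mul_iff_right₀ hπ).mpr h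
  have hθA : ∀ j i : Fin n, j < i → θ j ≤ A i := fun j i hji => by
    have hle : j.succ ≤ i.castSucc := by
      rw [Fin.lt_def] at hji; rw [Fin.le_def]; simpa using hji
    have h : φ j.succ ≤ φ i.castSucc := hφmono.monotone hle
    show Real.pi * φ j.succ ≤ Real.pi * φ i.castSucc
    exact mul_le_mul_of_nonneg_left h hπ.le
  -- the masses
  set c : ℕ → ℕ → ℕ := fun a b =>
    if ha : a < n then if hb : b < n then D.mult (D.Δ ⟨a, ha⟩) ⟨b, hb⟩ else 0 else 0 with hcdef
  set s : ℕ → ℝ := fun a =>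
    if ha : a < n then Real.sin (θ ⟨a, ha⟩ - A ⟨a, ha⟩) else 1 with hsdef
  have hs : ∀ a, 0 < s a := fun a => by
    rw [hsdef]; dsimp only
    split
    · rename_i ha
      exact Real.sin_pos_of_pos_of_lt_pi (by linarith [hAθ ⟨a, ha⟩])
        (by linarith [hθlt ⟨a, ha⟩, hA0 ⟨a, ha⟩])
    · norm_num
  set m : Fin n → ℝ := fun i => mfun c s i.val with hmdef
  have hm : ∀ i, 0 < m i := fun i => mfun_pos c s hs i.val
  have hcval : ∀ (i j : Fin n), (c i.val j.val : ℝ) = (D.mult (D.Δ i) j : ℝ) := by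
    intro i j
    rw [hcdef]; dsimp only
    rw [dif_pos i.isLt, dif_pos j.isLt]
  have hkey : ∀ i : Fin n,
      m i * Real.sin (θ i - A i)
        = 1 + ∑ a ∈ Finset.range i.val, (c i.val a : ℝ) * mfun c s a := by
    intro i
    have hsi : s i.val = Real.sin (θ i - A i) := by
      rw [hsdef]; dsimp only; rw [dif_pos i.isLt]
    rw [hmdef]; dsimp only
    rw [← hsi, mfun_def, div_mul_cancel₀ _ (ne_of_gt (hs i.val)),
      Finset.sum_attach (Finset.range i.val) (fun a => (c i.val a : ℝ) * mfun c s a)]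
  -- the stability function
  set z : Fin n → ℂ := fun j => (m j : ℂ) * Complex.exp ((θ j : ℝ) * Complex.I) with hzdef
  obtain ⟨Z, hZ⟩ := D.exists_Zhom z
  have hL : ∀ (α : ℝ) (X : C), (Complex.exp ((-α : ℝ) * Complex.I) * Z (K0.cls X)).im
      = ∑ j, (D.mult X j : ℝ) * (m j * Real.sin (θ j - α)) := fun α X => by
    rw [hZ, hzdef]
    exact sum_L n θ m (D.mult X) α
  have hIm : ∀ X : C, (Z (K0.cls X)).im
      = ∑ j, (D.mult X j : ℝ) * (m j * Real.sin (θ j)) := fun X => by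
    have := hL 0 X
    simpa using this
  have hex : ∀ X : C, ¬ IsZero X → ∃ j, D.mult X j ≠ 0 := fun X hX => by
    by_contra h; push_neg at h
    exact hX ((D.mult_eq_zero_iff X).mp fun j => h j)
  have hImpos : ∀ X : C, ¬ IsZero X → 0 < (Z (K0.cls X)).im := fun X hX => by
    obtain ⟨j0, hj0⟩ := hex X hX
    rw [hIm]
    apply Finset.sum_pos'
    · intro j _
      have := Real.sin_pos_of_pos_of_lt_pi (hθpos j) (hθlt j)
      have := (hm j).le
      positivity
    · refine ⟨j0, Finset.mem_univ _, ?_⟩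
      have h1 : (0:ℝ) < (D.mult X j0 : ℝ) := by
        exact_mod_cast Nat.pos_of_ne_zero hj0
      have h2 := Real.sin_pos_of_pos_of_lt_pi (hθpos j0) (hθlt j0)
      have h3 := hm j0
      positivity
  have harg_le : ∀ X : C, ¬ IsZero X → ∀ α : ℝ, 0 ≤ α → α < Real.pi →
      (∀ j, D.mult X j ≠ 0 → θ j ≤ α) → (Z (K0.cls X)).arg ≤ α := by
    intro X hX α h0 hπ' hcond
    by_contra h
    push_neg at h
    have hLpos := ((arg_sign α h0 hπ' _ (hImpos X hX)).1).mp h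
    rw [hL] at hLpos
    have hle : ∑ j, (D.mult X j : ℝ) * (m j * Real.sin (θ j - α)) ≤ 0 := by
      apply Finset.sum_nonpos
      intro j _
      rcases eq_or_ne (D.mult X j) 0 with hh | hh
      · rw [hh]; simp
      · have h1 : θ j ≤ α := hcond j hh
        have h2 : Real.sin (θ j - α) ≤ 0 :=
          Real.sin_nonpos_of_nonpos_of_neg_pi_le (by linarith) (by linarith [hθpos j])
        have h3 : (0:ℝ) ≤ (D.mult X j : ℝ) := Nat.cast_nonneg _
        have h4 : m j * Real.sin (θ j - α) ≤ 0 :=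
          mul_nonpos_of_nonneg_of_nonpos (hm j).le h2
        exact mul_nonpos_of_nonneg_of_nonpos h3 h4
    linarith
  have hΔne : ∀ i, ¬ IsZero (D.Δ i) := fun i => D.delta_ne_zero i (hΔ i)
  have hmultΔ_gt : ∀ i j : Fin n, i < j → D.mult (D.Δ i) j = 0 := fun i j h =>
    D.delta_mult_gt i h
  -- lower bound on phase of Δ i
  have hargΔ_gt : ∀ i, A i < (Z (K0.cls (D.Δ i))).arg := by
    intro i
    apply ((arg_sign (A i) (hA0 i) (hAltπ i) _ (hImpos _ (hΔne i))).1).mpr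
    rw [hL]
    rw [← Finset.add_sum_erase _ _ (Finset.mem_univ i)]
    have hterm : (D.mult (D.Δ i) i : ℝ) * (m i * Real.sin (θ i - A i))
        = 1 + ∑ a ∈ Finset.range i.val, (c i.val a : ℝ) * mfun c s a := by
      rw [hΔ i]
      push_cast
      rw [one_mul, hkey i]
    rw [hterm]
    set g' : ℕ → ℝ := fun a => if a < i.val then (c i.val a : ℝ) * mfun c s a else 0
      with hg'def
    have hrest : ∀ j ∈ Finset.univ.erase i,
        -(g' j.val) ≤ (D.mult (D.Δ i) j : ℝ) * (m j * Real.sin (θ j - A i)) := by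
      intro j hj
      have hji : j ≠ i := Finset.ne_of_mem_erase hj
      rcases lt_trichotomy j i with hc | hc | hc
      · have hval : j.val < i.val := hc
        rw [hg'def]; dsimp only; rw [if_pos hval, hcval i j]
        have h1 : (-1 : ℝ) ≤ Real.sin (θ j - A i) := Real.neg_one_le_sin _
        have h2 : (0:ℝ) ≤ (D.mult (D.Δ i) j : ℝ) := Nat.cast_nonneg _
        have h3 : m j = mfun c s j.val := rfl
        rw [← h3]
        have h4 : m j * (-1) ≤ m j * Real.sin (θ j - A i) :=
          mul_le_mul_of_nonneg_left h1 (hm j).le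
        have h5 : (D.mult (D.Δ i) j : ℝ) * (m j * (-1))
            ≤ (D.mult (D.Δ i) j : ℝ) * (m j * Real.sin (θ j - A i)) :=
          mul_le_mul_of_nonneg_left h4 h2
        have h6 : (D.mult (D.Δ i) j : ℝ) * (m j * (-1))
            = -((D.mult (D.Δ i) j : ℝ) * m j) := by ring
        linarith
      · exact absurd hc hji
      · rw [hmultΔ_gt i j hc]
        rw [hg'def]; dsimp only
        rw [if_neg (by omega : ¬ j.val < i.val)]
        simp
    have hsum_g' : ∑ j ∈ Finset.univ.erase i, g' j.val
        = ∑ a ∈ Finset.range i.val, (c i.val a : ℝ) * mfun c s a := by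
      rw [Finset.sum_erase _ (by rw [hg'def]; dsimp only; rw [if_neg (lt_irrefl _)])]
      rw [Fin.sum_univ_eq_sum_range (fun a => g' a) n]
      rw [← Finset.sum_subset (Finset.range_subset_range.mpr i.isLt.le)
        (fun x _ hx => by
          rw [hg'def]; dsimp only
          rw [if_neg (by simpa using hx)])]
      apply Finset.sum_congr rfl
      intro a ha
      rw [hg'def]; dsimp only
      rw [if_pos (Finset.mem_range.mp ha)]
    have hge : -(∑ a ∈ Finset.range i.val, (c i.val a : ℝ) * mfun c s a)
        ≤ ∑ j ∈ Finset.univ.erase i, (D.mult (D.Δ i) j : ℝ) * (m j * Real.sin (θ j - A i)) := by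
      rw [← hsum_g', ← Finset.sum_neg_distrib]
      exact Finset.sum_le_sum hrest
    linarith
  have hargΔ_le : ∀ i, (Z (K0.cls (D.Δ i))).arg ≤ θ i := fun i =>
    harg_le _ (hΔne i) (θ i) (hθpos i).le (hθlt i) (fun j hj => by
      rcases lt_trichotomy j i with h | h | h
      · exact le_of_lt (lt_of_le_of_lt (hθA j i h) (hAθ i))
      · rw [h]
      · exact absurd (hmultΔ_gt i j h) hj)
  -- upper bound on phase, and phase statements
  have hlow : ∀ i, φ i.castSucc < phase (Z (K0.cls (D.Δ i))) := by
    intro i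
    show φ i.castSucc < (Z (K0.cls (D.Δ i))).arg / Real.pi
    rw [lt_div_iff₀ hπ]
    calc φ i.castSucc * Real.pi = A i := by show _ = Real.pi * _; ring
    _ < _ := hargΔ_gt i
  have hup : ∀ i, phase (Z (K0.cls (D.Δ i))) ≤ φ i.succ := by
    intro i
    show (Z (K0.cls (D.Δ i))).arg / Real.pi ≤ φ i.succ
    rw [div_le_iff₀ hπ]
    calc (Z (K0.cls (D.Δ i))).arg ≤ θ i := hargΔ_le i
    _ = φ i.succ * Real.pi := by show Real.pi * _ = _; ring
  refine ⟨m, hm, Z, ?_, ?_, fun i => ⟨hlow i, hup i⟩, ?_, ?_, ?_⟩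
  · -- stability function
    intro X hX
    show 0 < (Z (K0.cls X)).arg
    exact (arg_mem _ (hImpos X hX)).1
  · -- value on simples
    intro i
    rw [hZ]
    have hc : ∀ j : Fin n, ((D.mult (D.S i) j : ℂ)) * z j = if j = i then z i else 0 := by
      intro j
      rw [D.mult_simple i j]
      by_cases h : i = j
      · subst h; simp
      · rw [if_neg h, if_neg (Ne.symm h)]; simp
    rw [Finset.sum_congr rfl fun j _ => hc j,
      Finset.sum_ite_eq' Finset.univ i (fun _ => z i), if_pos (Finset.mem_univ i)]
  · -- equality iff
    intro i
    have hsign := arg_sign (θ i) (hθpos i).le (hθlt i) _ (hImpos _ (hΔne i))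
    constructor
    · intro hp
      have harg : (Z (K0.cls (D.Δ i))).arg = θ i := by
        have hp' : (Z (K0.cls (D.Δ i))).arg / Real.pi = φ i.succ := hp
        show _ = Real.pi * φ i.succ
        field_simp at hp'
        linarith
      have h1 : ¬ 0 < (Complex.exp ((-(θ i) : ℝ) * Complex.I) * Z (K0.cls (D.Δ i))).im := by
        rw [← hsign.1, harg]; exact lt_irrefl _
      have h2 : ¬ (Complex.exp ((-(θ i) : ℝ) * Complex.I) * Z (K0.cls (D.Δ i))).im < 0 := by
        rw [← hsign.2, harg]; exact lt_irrefl _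
      have hLeq : ∑ j, (D.mult (D.Δ i) j : ℝ) * (m j * Real.sin (θ j - θ i)) = 0 := by
        rw [← hL]
        exact le_antisymm (not_lt.mp h1) (not_lt.mp h2)
      have hterms : ∀ j ∈ Finset.univ,
          (D.mult (D.Δ i) j : ℝ) * (m j * Real.sin (θ j - θ i)) ≤ 0 := by
        intro j _
        rcases lt_trichotomy j i with h | h | h
        · have hs2 : Real.sin (θ j - θ i) ≤ 0 :=
            Real.sin_nonpos_of_nonpos_of_neg_pi_le
              (by linarith [lt_of_le_of_lt (hθA j i h) (hAθ i)]) (by linarith [hθpos j, hθlt i])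
          exact mul_nonpos_of_nonneg_of_nonpos (Nat.cast_nonneg _)
            (mul_nonpos_of_nonneg_of_nonpos (hm j).le hs2)
        · subst h; simp [sub_self]
        · rw [hmultΔ_gt i j h]; simp
      have hzero := (Finset.sum_eq_zero_iff_of_nonpos hterms).mp hLeq
      apply D.delta_iso_simple
      intro j
      rcases lt_trichotomy j i with h | h | h
      · rw [if_neg (fun hh => absurd hh.symm (ne_of_lt h))]
        have hj0 := hzero j (Finset.mem_univ j)
        have hs2 : Real.sin (θ j - θ i) < 0 := by
          have h1' : θ j < θ i := lt_of_le_of_lt (hθA j i h) (hAθ i)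
          have := Real.sin_pos_of_pos_of_lt_pi (x := θ i - θ j) (by linarith)
            (by linarith [hθpos j, hθlt i])
          rw [show θ j - θ i = -(θ i - θ j) by ring, Real.sin_neg]
          linarith
        have hmsin : m j * Real.sin (θ j - θ i) ≠ 0 :=
          ne_of_lt (mul_neg_of_pos_of_neg (hm j) hs2)
        have := mul_eq_zero.mp hj0
        rcases this with h' | h'
        · exact_mod_cast h'
        · exact absurd h' hmsin
      · subst h; rw [if_pos rfl]; exact hΔ j
      · rw [hmultΔ_gt i j h, if_neg (ne_of_lt h)]
    · rintro ⟨e⟩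
      have hmul : ∀ j, D.mult (D.Δ i) j = if i = j then 1 else 0 := fun j => by
        rw [D.mult_iso e j, D.mult_simple i j]
      have hLeq : (Complex.exp ((-(θ i) : ℝ) * Complex.I) * Z (K0.cls (D.Δ i))).im = 0 := by
        rw [hL]
        apply Finset.sum_eq_zero
        intro j _
        rw [hmul j]
        by_cases h : i = j
        · subst h; simp [sub_self]
        · simp [h]
      have harg : (Z (K0.cls (D.Δ i))).arg = θ i := by
        by_contra h
        rcases lt_or_gt_of_ne h with h' | h'
        · have := hsign.2.mp h'; rw [hLeq] at this; exact lt_irrefl _ this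
        · have := hsign.1.mp h'; rw [hLeq] at this; exact lt_irrefl _ this
      show (Z (K0.cls (D.Δ i))).arg / Real.pi = φ i.succ
      rw [harg]
      show Real.pi * φ i.succ / Real.pi = φ i.succ
      field_simp
  · -- stability of the standard objects
    intro i
    refine ⟨hΔne i, ?_⟩
    intro Y f hmono hY hiso
    haveI := hmono
    have hcoker_ne : ¬ IsZero (cokernel f) := by
      intro h
      have h0 : cokernel.π f = 0 := h.eq_of_tgt _ _
      haveI : Epi f := CategoryTheory.Abelian.epi_of_cokernel_π_eq_zero f h0
      exact hiso (isIso_of_mono_of_epi f)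
    haveI hq : Epi (D.q i) := (D.std i).1
    haveI : Epi (D.q i ≫ cokernel.π f) := epi_comp _ _
    have h1 : 1 ≤ D.mult (cokernel f) i :=
      D.mult_pos_of_epi i (D.q i ≫ cokernel.π f) inferInstance hcoker_ne
    have hadd := D.mult_of_mono f
    have hYi : D.mult Y i = 0 := by
      have := hadd i; rw [hΔ i] at this; omega
    have hYgt : ∀ j, i < j → D.mult Y j = 0 := fun j hj => by
      have := hadd j; rw [hmultΔ_gt i j hj] at this; omega
    have hargY : (Z (K0.cls Y)).arg ≤ A i :=
      harg_le Y hY (A i) (hA0 i) (hAltπ i) (fun j hj => by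
        rcases lt_trichotomy j i with h | h | h
        · exact hθA j i h
        · exact absurd (h ▸ hYi) hj
        · exact absurd (hYgt j h) hj)
    show (Z (K0.cls Y)).arg / Real.pi < (Z (K0.cls (D.Δ i))).arg / Real.pi
    have hlt := lt_of_le_of_lt hargY (hargΔ_gt i)
    exact (div_lt_div_iff_of_pos_right hπ).mpr hlt
  · -- monotone phases
    intro i j hij
    have h2 : φ i.succ ≤ φ j.castSucc := by
      apply hφmono.monotone
      rw [Fin.le_def]
      rw [Fin.lt_def] at hij
      simpa using hij
    exact lt_of_le_of_lt ((hup i).trans h2) (hlow j)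

end MainProof

/-- **Lemma** (construction of a stability function making the standard objects stable).
Suppose `[Δ i : S i] = 1` for each `i`.  Then for any choice of phases
`0 = φ 0 < φ 1 < ⋯ < φ n < 1` there are positive reals `m i` such that the stability
function `Z` determined by `Z (S i) = m i · exp(iπ · φ (i+1))` satisfies
`φ i < φ(Δ i) ≤ φ (i+1)` for each `i`, with equality `φ(Δ i) = φ (i+1)` if and only if
`Δ i ≅ S i`; for such `Z` each standard object is `Z`-stable and the phases of
`Δ 0, …, Δ (n-1)` are strictly increasing. -/
theorem exists_stabilityFunction_standard_stable (D : DeligneData k C n)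
    (hΔ : ∀ i, D.mult (D.Δ i) i = 1)
    (φ : Fin (n + 1) → ℝ) (hφ0 : φ 0 = 0) (hφmono : StrictMono φ)
    (hφlast : φ (Fin.last n) < 1) :
    ∃ m : Fin n → ℝ, (∀ i, 0 < m i) ∧
      ∃ Z : K0 C →+ ℂ, IsStabilityFunction Z ∧
        (∀ i : Fin n, Z (K0.cls (D.S i)) =
          (m i : ℂ) * Complex.exp ((Real.pi * φ i.succ : ℝ) * Complex.I)) ∧
        (∀ i : Fin n, φ i.castSucc < phase (Z (K0.cls (D.Δ i))) ∧
          phase (Z (K0.cls (D.Δ i))) ≤ φ i.succ) ∧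
        (∀ i : Fin n, phase (Z (K0.cls (D.Δ i))) = φ i.succ ↔ Nonempty (D.Δ i ≅ D.S i)) ∧
        (∀ i, IsZStable Z (D.Δ i)) ∧
        (∀ i j : Fin n, i < j →
          phase (Z (K0.cls (D.Δ i))) < phase (Z (K0.cls (D.Δ j)))) := by
  exact exists_stabilityFunction_standard_stable' D hΔ φ hφ0 hφmono hφlast

end HWPaper
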